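/- For every Ω ∈ H_2, one has θ₀(Ω/2)² = θ₀(Ω)² + θ₄(Ω)² + θ₈(Ω)² + θ₁₂(Ω)². -/

import Mathlib

open Matrix

/-- The Siegel upper half-space: symmetric complex `g × g` matrices with positive
definite imaginary part. -/
def SiegelUpperHalf (g : ℕ) : Set (Matrix (Fin g) (Fin g) ℂ) :=
  {Ω | Ω.IsSymm ∧ (Matrix.of fun i j => (Ω i j).im).PosDef}

/-- The general term of the theta series with characteristic `(a, b)`. -/
noncomputable def thetaTerm (g : ℕ) (a b : Fin g → ℚ) (z : Fin g → ℂ)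
    (Ω : Matrix (Fin g) (Fin g) ℂ) (n : Fin g → ℤ) : ℂ :=
  Complex.exp (Real.pi * Complex.I *
      ((fun i => (n i : ℂ) + (a i : ℂ)) ⬝ᵥ Ω.mulVec (fun i => (n i : ℂ) + (a i : ℂ)))
    + 2 * Real.pi * Complex.I *
      ((fun i => (n i : ℂ) + (a i : ℂ)) ⬝ᵥ (fun i => z i + (b i : ℂ))))

/-- The theta function with characteristic `(a, b)`. -/
noncomputable def theta (g : ℕ) (a b : Fin g → ℚ) (z : Fin g → ℂ)
    (Ω : Matrix (Fin g) (Fin g) ℂ) : ℂ :=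
  ∑' n : Fin g → ℤ, thetaTerm g a b z Ω n

/-- The genus-2 theta constant `θ_k` with `k = b₀ + 2b₁ + 4a₀ + 8a₁`,
i.e. `θ[a/2; b/2](0, Ω)` for `a, b ∈ {0,1}²`. -/
noncomputable def thetaConst (k : ℕ) (Ω : Matrix (Fin 2) (Fin 2) ℂ) : ℂ :=
  theta 2 ![((k / 4 % 2 : ℕ) : ℚ) / 2, ((k / 8 % 2 : ℕ) : ℚ) / 2]
          ![((k % 2 : ℕ) : ℚ) / 2, ((k / 2 % 2 : ℕ) : ℚ) / 2] 0 Ω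

/-! ### Auxiliary material for the proof -/

section Aux

open Complex Real

/-- Norm of a theta series term at `z = 0`. -/
lemma norm_thetaTerm (Ω : Matrix (Fin 2) (Fin 2) ℂ) (α β : Fin 2 → ℚ) (n : Fin 2 → ℤ) :
    ‖thetaTerm 2 α β 0 Ω n‖ =
      Real.exp (-Real.pi *
        (((n 0 : ℝ) + (α 0 : ℝ)) * ((Ω 0 0).im * ((n 0 : ℝ) + (α 0 : ℝ)) + (Ω 0 1).im * ((n 1 : ℝ) + (α 1 : ℝ)))
         + ((n 1 : ℝ) + (α 1 : ℝ)) * ((Ω 1 0).im * ((n 0 : ℝ) + (α 0 : ℝ)) + (Ω 1 1).im * ((n 1 : ℝ) + (α 1 : ℝ))))) := by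
  rw [thetaTerm, Complex.norm_exp]
  congr 1
  simp only [dotProduct, Matrix.mulVec, Fin.sum_univ_two, Pi.zero_apply, zero_add]
  simp [Complex.add_re, Complex.mul_re, Complex.mul_im, Complex.add_im,
    Complex.I_re, Complex.I_im, Complex.ofReal_re, Complex.ofReal_im,
    Complex.intCast_re, Complex.intCast_im, Complex.ratCast_re, Complex.ratCast_im]

/-- One-dimensional Gaussian summability. -/
lemma summable_gauss {c : ℝ} (hc : 0 < c) (a : ℝ) :
    Summable fun m : ℤ => Real.exp (-Real.pi * (c * ((m : ℝ) + a) ^ 2)) := by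
  have h := summable_pow_mul_jacobiTheta₂_term_bound (c * |a|) hc 0
  simp only [pow_zero, one_mul] at h
  refine h.of_nonneg_of_le (fun _ => (Real.exp_pos _).le) fun m => ?_
  rw [Real.exp_le_exp]
  push_cast [Int.cast_abs]
  have h1 : -(|a| * |(m : ℝ)|) ≤ a * m := by
    rw [← abs_mul]; exact neg_abs_le _
  have key : c * (m : ℝ) ^ 2 - 2 * (c * |a|) * |(m : ℝ)| ≤ c * ((m : ℝ) + a) ^ 2 := by
    nlinarith [mul_nonneg hc.le (show (0:ℝ) ≤ a * (m:ℝ) + |a| * |(m:ℝ)| by linarith),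
      mul_nonneg hc.le (sq_nonneg a)]
  nlinarith [mul_le_mul_of_nonneg_left key Real.pi_pos.le]

/-- A positive-definite real 2×2 matrix dominates a multiple of the standard form. -/
lemma posdef_quad' (Y : Matrix (Fin 2) (Fin 2) ℝ) (hY : Y.PosDef) :
    ∃ c : ℝ, 0 < c ∧ ∀ x0 x1 : ℝ,
      c * (x0 ^ 2 + x1 ^ 2) ≤ x0 * (Y 0 0 * x0 + Y 0 1 * x1) + x1 * (Y 1 0 * x0 + Y 1 1 * x1) := by
  have h00 : 0 < Y 0 0 := by
    have := hY.dotProduct_mulVec_pos (x := ![1, 0]) (by intro h; simpa using congrFun h 0)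
    simpa [dotProduct, Matrix.mulVec, Fin.sum_univ_two] using this
  have h11 : 0 < Y 1 1 := by
    have := hY.dotProduct_mulVec_pos (x := ![0, 1]) (by intro h; simpa using congrFun h 1)
    simpa [dotProduct, Matrix.mulVec, Fin.sum_univ_two] using this
  have hsym : Y 1 0 = Y 0 1 := by
    have := hY.1
    simpa using congrFun (congrFun this 0) 1
  have hdet : 0 < Y 0 0 * Y 1 1 - Y 0 1 * Y 1 0 := by
    have := hY.det_pos
    rwa [Matrix.det_fin_two] at this
  refine ⟨(Y 0 0 * Y 1 1 - Y 0 1 * Y 1 0) / (Y 0 0 + Y 1 1),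
    div_pos hdet (by linarith), fun x0 x1 => ?_⟩
  set c := (Y 0 0 * Y 1 1 - Y 0 1 * Y 1 0) / (Y 0 0 + Y 1 1) with hc
  have hcs : c * (Y 0 0 + Y 1 1) = Y 0 0 * Y 1 1 - Y 0 1 * Y 1 0 := by
    rw [hc, div_mul_cancel₀ _ (ne_of_gt (by linarith))]
  have hc0 : 0 < c := div_pos hdet (by linarith)
  rw [hsym] at hcs ⊢
  have h1 : c * (Y 0 0 + Y 1 1) < Y 0 0 * (Y 0 0 + Y 1 1) := by
    rw [hcs]; nlinarith [sq_nonneg (Y 0 1), sq_nonneg (Y 0 0)]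
  have hA : 0 < Y 0 0 - c := by
    have := (mul_lt_mul_iff_of_pos_right (show (0:ℝ) < Y 0 0 + Y 1 1 by linarith)).mp h1
    linarith
  have hB : (Y 0 0 - c) * (Y 1 1 - c) - Y 0 1 ^ 2 = c ^ 2 := by linear_combination -hcs
  nlinarith [sq_nonneg ((Y 0 0 - c) * x0 + Y 0 1 * x1), hA, hB,
    mul_nonneg (sq_nonneg c) (sq_nonneg x1), sq_nonneg x1]

set_option maxHeartbeats 1000000 in
/-- The theta series (at `z = 0`) is absolutely summable on the Siegel space. -/
lemma summable_norm_theta (Ω : Matrix (Fin 2) (Fin 2) ℂ) (hΩ : Ω ∈ SiegelUpperHalf 2)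
    (α β : Fin 2 → ℚ) :
    Summable fun n : Fin 2 → ℤ => ‖thetaTerm 2 α β 0 Ω n‖ := by
  obtain ⟨c, hc, hkey⟩ := posdef_quad' _ hΩ.2
  simp only [Matrix.of_apply] at hkey
  have maj : Summable fun n : Fin 2 → ℤ =>
      Real.exp (-Real.pi * (c * ((n 0 : ℝ) + (α 0 : ℝ)) ^ 2)) *
        Real.exp (-Real.pi * (c * ((n 1 : ℝ) + (α 1 : ℝ)) ^ 2)) := by
    have h2 : Summable fun x : ℤ × ℤ =>
        Real.exp (-Real.pi * (c * ((x.1 : ℝ) + (α 0 : ℝ)) ^ 2)) *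
          Real.exp (-Real.pi * (c * ((x.2 : ℝ) + (α 1 : ℝ)) ^ 2)) :=
      (summable_gauss hc (α 0 : ℝ)).mul_of_nonneg (summable_gauss hc (α 1 : ℝ))
        (fun _ => (Real.exp_pos _).le) (fun _ => (Real.exp_pos _).le)
    have h3 := (Equiv.summable_iff (piFinTwoEquiv fun _ => ℤ)).mpr h2
    refine h3.congr fun n => ?_
    simp [piFinTwoEquiv, Function.comp]
  refine maj.of_nonneg_of_le (fun _ => norm_nonneg _) fun n => ?_
  rw [norm_thetaTerm, ← Real.exp_add, Real.exp_le_exp]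
  have := hkey ((n 0 : ℝ) + (α 0 : ℝ)) ((n 1 : ℝ) + (α 1 : ℝ))
  have hπ := Real.pi_pos
  nlinarith [this]

/-- Integer vector attached to a pair of bits. -/
def av (a : Fin 2 × Fin 2) : Fin 2 → ℤ := ![((a.1 : ℕ) : ℤ), ((a.2 : ℕ) : ℤ)]

/-- Theta term with characteristic `(a/2, 0)` at `z = 0`. -/
noncomputable def Gt (Ω : Matrix (Fin 2) (Fin 2) ℂ) (a : Fin 2 × Fin 2) (n : Fin 2 → ℤ) : ℂ :=
  thetaTerm 2 ![((a.1 : ℕ) : ℚ) / 2, ((a.2 : ℕ) : ℚ) / 2] ![0, 0] 0 Ω n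

open Fin.NatCast in
/-- The reindexing bijection `(a, p, q) ↦ (p + q + a, p - q)`. -/
def reidx : ((Fin 2 × Fin 2) × ((Fin 2 → ℤ) × (Fin 2 → ℤ))) ≃ ((Fin 2 → ℤ) × (Fin 2 → ℤ)) where
  toFun x := (fun i => x.2.1 i + x.2.2 i + av x.1 i, fun i => x.2.1 i - x.2.2 i)
  invFun y :=
    (((((y.1 0 + y.2 0) % 2).toNat : Fin 2), (((y.1 1 + y.2 1) % 2).toNat : Fin 2)),
     (fun i => (y.1 i + y.2 i - (y.1 i + y.2 i) % 2) / 2,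
      fun i => (y.1 i - y.2 i - (y.1 i + y.2 i) % 2) / 2))
  left_inv := by
    rintro ⟨⟨a1, a2⟩, p, q⟩
    have h1 := a1.isLt
    have h2 := a2.isLt
    simp only [av, Matrix.cons_val_zero, Matrix.cons_val_one, Matrix.head_cons, Prod.mk.injEq]
    refine ⟨⟨?_, ?_⟩, funext fun i => ?_, funext fun i => ?_⟩
    · refine Fin.ext ?_; rw [Fin.val_natCast]; omega
    · refine Fin.ext ?_; rw [Fin.val_natCast]; omega
    · fin_cases i <;> simp <;> omega
    · fin_cases i <;> simp <;> omega
  right_inv := by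
    rintro ⟨m, n⟩
    have c0 : ((((m 0 + n 0) % 2).toNat : Fin 2) : ℕ) = ((m 0 + n 0) % 2).toNat % 2 := by
      simp [Fin.val_natCast]
    have c1 : ((((m 1 + n 1) % 2).toNat : Fin 2) : ℕ) = ((m 1 + n 1) % 2).toNat % 2 := by
      simp [Fin.val_natCast]
    simp only [av, Prod.mk.injEq]
    refine ⟨funext fun i => ?_, funext fun i => ?_⟩ <;>
      fin_cases i <;>
        simp only [Fin.mk_zero, Fin.mk_one, Fin.isValue, Matrix.cons_val_zero, Matrix.cons_val_one,
          Matrix.head_cons, c0, c1] <;>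
          omega

/-- The key algebraic identity between the theta terms. -/
lemma key_term (Ω : Matrix (Fin 2) (Fin 2) ℂ) (a : Fin 2 × Fin 2) (p q : Fin 2 → ℤ) :
    Gt ((2 : ℂ)⁻¹ • Ω) (0, 0) (fun i => p i + q i + av a i) *
      Gt ((2 : ℂ)⁻¹ • Ω) (0, 0) (fun i => p i - q i) =
    Gt Ω a p * Gt Ω a q := by
  simp only [thetaTerm, Gt, ← Complex.exp_add]
  congr 1
  simp only [av, dotProduct, Matrix.mulVec, Fin.sum_univ_two, Matrix.smul_apply, smul_eq_mul,
    Pi.zero_apply, Matrix.cons_val_zero, Matrix.cons_val_one, Matrix.head_cons, zero_add,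
    Rat.cast_zero, add_zero, Rat.cast_div, Fin.val_zero, Nat.cast_zero]
  push_cast
  ring

/-- `Ω/2` stays in the Siegel space. -/
lemma half_mem (Ω : Matrix (Fin 2) (Fin 2) ℂ) (hΩ : Ω ∈ SiegelUpperHalf 2) :
    (2 : ℂ)⁻¹ • Ω ∈ SiegelUpperHalf 2 := by
  obtain ⟨hs, hp⟩ := hΩ
  have h2 : (2 : ℂ)⁻¹ = ((2⁻¹ : ℝ) : ℂ) := by norm_num
  constructor
  · refine Matrix.IsSymm.ext fun i j => ?_
    simp [Matrix.smul_apply, hs.apply i j]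
  · rw [Matrix.posDef_iff_dotProduct_mulVec]; constructor
    · show _ = _
      ext i j
      simp only [Matrix.conjTranspose_apply, Matrix.of_apply, Matrix.smul_apply, star_trivial,
        smul_eq_mul, h2, Complex.im_ofReal_mul]
      rw [hs.apply i j]
    · intro x hx
      have hpos := hp.dotProduct_mulVec_pos hx
      simp only [star_trivial, dotProduct, Matrix.mulVec, Fin.sum_univ_two, Matrix.of_apply,
        Matrix.smul_apply, smul_eq_mul, h2, Complex.im_ofReal_mul] at hpos ⊢
      nlinarith [hpos]

/-- Identification of the four theta constants with `Gt` sums. -/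
lemma tconst (Ω : Matrix (Fin 2) (Fin 2) ℂ) :
    thetaConst 0 Ω = ∑' n : Fin 2 → ℤ, Gt Ω (0, 0) n ∧
    thetaConst 4 Ω = ∑' n : Fin 2 → ℤ, Gt Ω (1, 0) n ∧
    thetaConst 8 Ω = ∑' n : Fin 2 → ℤ, Gt Ω (0, 1) n ∧
    thetaConst 12 Ω = ∑' n : Fin 2 → ℤ, Gt Ω (1, 1) n := by
  refine ⟨?_, ?_, ?_, ?_⟩ <;> · simp only [thetaConst, theta, Gt]; norm_num

end Aux

/-- `θ₀(Ω/2)² = θ₀(Ω)² + θ₄(Ω)² + θ₈(Ω)² + θ₁₂(Ω)²` for every `Ω` in `H₂`. -/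
theorem theta0_half_sq (Ω : Matrix (Fin 2) (Fin 2) ℂ)
    (hΩ : Ω ∈ SiegelUpperHalf 2) :
    thetaConst 0 ((2 : ℂ)⁻¹ • Ω) ^ 2 =
      thetaConst 0 Ω ^ 2 + thetaConst 4 Ω ^ 2 + thetaConst 8 Ω ^ 2 +
        thetaConst 12 Ω ^ 2 := by
  have hΩ' := half_mem Ω hΩ
  have hG : ∀ a : Fin 2 × Fin 2, Summable fun n : Fin 2 → ℤ => ‖Gt Ω a n‖ := fun a =>
    summable_norm_theta Ω hΩ _ _
  have hF : Summable fun n : Fin 2 → ℤ => ‖Gt ((2 : ℂ)⁻¹ • Ω) (0, 0) n‖ :=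
    summable_norm_theta _ hΩ' _ _
  -- rewrite the squares as double sums
  have sqF : (∑' n : Fin 2 → ℤ, Gt ((2 : ℂ)⁻¹ • Ω) (0, 0) n) ^ 2 =
      ∑' x : (Fin 2 → ℤ) × (Fin 2 → ℤ), Gt ((2 : ℂ)⁻¹ • Ω) (0, 0) x.1 * Gt ((2 : ℂ)⁻¹ • Ω) (0, 0) x.2 := by
    rw [sq, tsum_mul_tsum_of_summable_norm hF hF]
  have sqG : ∀ a : Fin 2 × Fin 2, (∑' n : Fin 2 → ℤ, Gt Ω a n) ^ 2 =
      ∑' x : (Fin 2 → ℤ) × (Fin 2 → ℤ), Gt Ω a x.1 * Gt Ω a x.2 := fun a => by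
    rw [sq, tsum_mul_tsum_of_summable_norm (hG a) (hG a)]
  obtain ⟨t0, t4, t8, t12⟩ := tconst Ω
  obtain ⟨t0', -, -, -⟩ := tconst ((2 : ℂ)⁻¹ • Ω)
  rw [t0, t4, t8, t12, t0', sqF, sqG, sqG, sqG, sqG]
  -- summability of the double sum
  have hPsum : Summable fun x : (Fin 2 → ℤ) × (Fin 2 → ℤ) =>
      Gt ((2 : ℂ)⁻¹ • Ω) (0, 0) x.1 * Gt ((2 : ℂ)⁻¹ • Ω) (0, 0) x.2 :=
    (hF.mul_norm hF).of_norm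
  -- reindex
  have hre := (reidx.tsum_eq fun x : (Fin 2 → ℤ) × (Fin 2 → ℤ) =>
      Gt ((2 : ℂ)⁻¹ • Ω) (0, 0) x.1 * Gt ((2 : ℂ)⁻¹ • Ω) (0, 0) x.2).symm
  rw [hre]
  have hpt : ∀ y : (Fin 2 × Fin 2) × ((Fin 2 → ℤ) × (Fin 2 → ℤ)),
      Gt ((2 : ℂ)⁻¹ • Ω) (0, 0) (reidx y).1 * Gt ((2 : ℂ)⁻¹ • Ω) (0, 0) (reidx y).2 =
        Gt Ω y.1 y.2.1 * Gt Ω y.1 y.2.2 := by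
    rintro ⟨a, p, q⟩
    exact key_term Ω a p q
  rw [tsum_congr hpt]
  have hsum2 : Summable fun y : (Fin 2 × Fin 2) × ((Fin 2 → ℤ) × (Fin 2 → ℤ)) =>
      Gt Ω y.1 y.2.1 * Gt Ω y.1 y.2.2 :=
    ((reidx.summable_iff.mpr hPsum).congr hpt)
  rw [hsum2.tsum_prod, tsum_fintype]
  rw [Fintype.sum_prod_type, Fin.sum_univ_two, Fin.sum_univ_two, Fin.sum_univ_two]
  ring
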